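/- Let S be a numerical semigroup with gcd of left elements equal to 1, and let T = ⟨L(S)⟩. Then for every descendant S' of S, g(S') ≤ g(T) and c(S') ≤ c(T); that is, T attains the maximum genus and maximum conductor among all descendants of S. -/

import Mathlib

/-- A numerical semigroup: a cofinite additive submonoid of ℕ containing 0. -/
def IsNumericalSemigroup (S : Set ℕ) : Prop :=
  0 ∈ S ∧ (∀ a ∈ S, ∀ b ∈ S, a + b ∈ S) ∧ Sᶜ.Finite

/-- The nsConductor: least `c` such that every `n ≥ c` belongs to `S`. -/
noncomputable def nsConductor (S : Set ℕ) : ℕ :=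
  sInf {c : ℕ | ∀ n : ℕ, c ≤ n → n ∈ S}

/-- The genus: number of gaps. -/
noncomputable def genus (S : Set ℕ) : ℕ := Sᶜ.ncard

/-- The Frobenius number: largest integer not in `S` (for `S ≠ ℕ`). -/
noncomputable def nsFrobenius (S : Set ℕ) : ℕ := sSup Sᶜ

/-- The multiplicity: least positive element of `S`. -/
noncomputable def mult (S : Set ℕ) : ℕ := sInf {n : ℕ | n ∈ S ∧ n ≠ 0}

/-- `p` is a minimal generator (primitive) of `S`: nonzero element of `S` that is
not a sum of two nonzero elements of `S`. -/
def IsPrimitive (S : Set ℕ) (p : ℕ) : Prop :=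
  p ∈ S ∧ p ≠ 0 ∧ ∀ a ∈ S, ∀ b ∈ S, a ≠ 0 → b ≠ 0 → a + b ≠ p

/-- The set of minimal generators of `S`. -/
def primitives (S : Set ℕ) : Set ℕ := {p | IsPrimitive S p}

/-- The embedding dimension: number of minimal generators. -/
noncomputable def edim (S : Set ℕ) : ℕ := (primitives S).ncard

/-- The left elements: elements of `S` strictly below the nsConductor. -/
def lefts (S : Set ℕ) : Set ℕ := {s ∈ S | s < nsConductor S}

/-- The additive submonoid of ℕ generated by a set, viewed as a set. -/
def genBy (X : Set ℕ) : Set ℕ := (AddSubmonoid.closure X : Set ℕ)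

/-- `T` is a child of `S`: obtained by removing one big primitive. -/
def ChildOf (S T : Set ℕ) : Prop :=
  ∃ p : ℕ, IsPrimitive S p ∧ nsConductor S ≤ p ∧ T = S \ {p}

/-- `T` is a descendant of `S` (possibly `T = S`): obtained by finitely many
removals of big primitives. -/
def DescendantOf (S T : Set ℕ) : Prop :=
  Relation.ReflTransGen (fun A B => ChildOf A B) S T

/-- The gcd of the set `X` equals `1`: the only common divisor of all elements is `1`. -/
def SetGcdOne (X : Set ℕ) : Prop :=
  ∀ d : ℕ, (∀ x ∈ X, d ∣ x) → d = 1

lemma cond_nonempty {X : Set ℕ} (h : Xᶜ.Finite) :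
    {c : ℕ | ∀ n : ℕ, c ≤ n → n ∈ X}.Nonempty := by
  obtain ⟨b, hb⟩ := h.bddAbove
  refine ⟨b+1, fun n hn => ?_⟩
  by_contra hx
  exact absurd (hb hx) (by omega)

lemma cond_anti {X Y : Set ℕ} (hXY : X ⊆ Y) (hX : Xᶜ.Finite) :
    nsConductor Y ≤ nsConductor X :=
  csInf_le_csInf (OrderBot.bddBelow _) (cond_nonempty hX)
    (fun c hc n hn => hXY (hc n hn))

lemma mem_group_closure_sub {Y : Set ℤ} {z : ℤ} (hz : z ∈ AddSubgroup.closure Y) :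
    ∃ u ∈ AddSubmonoid.closure Y, ∃ v ∈ AddSubmonoid.closure Y, z = u - v := by
  induction hz using AddSubgroup.closure_induction with
  | mem x hx => exact ⟨x, AddSubmonoid.subset_closure hx, 0, zero_mem _, by ring⟩
  | zero => exact ⟨0, zero_mem _, 0, zero_mem _, by ring⟩
  | add a b _ _ ha hb =>
      obtain ⟨u1, hu1, v1, hv1, h1⟩ := ha
      obtain ⟨u2, hu2, v2, hv2, h2⟩ := hb
      exact ⟨u1 + u2, add_mem hu1 hu2, v1 + v2, add_mem hv1 hv2, by omega⟩
  | neg a _ ha =>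
      obtain ⟨u, hu, v, hv, h⟩ := ha
      exact ⟨v, hv, u, hu, by omega⟩

lemma cofinite_of_consec {M : AddSubmonoid ℕ} {v : ℕ} (hv : v ∈ M) (hv1 : v + 1 ∈ M) :
    ((M : Set ℕ))ᶜ.Finite := by
  apply Set.Finite.subset (Set.finite_Iio (v * v + 1))
  intro n hn
  simp only [Set.mem_compl_iff, SetLike.mem_coe] at hn
  simp only [Set.mem_Iio]
  by_contra hge
  push_neg at hge
  have hvpos : 0 < v := by
    rcases Nat.eq_zero_or_pos v with h0 | h
    · subst h0
      have : n • (0 + 1 : ℕ) ∈ M := nsmul_mem hv1 n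
      simp at this
      exact (hn this).elim
    · exact h
  set q := n / v with hq
  set r := n % v with hr
  have hrv : r < v := Nat.mod_lt _ hvpos
  have hnq : n = q * v + r := by rw [hq, hr, Nat.mul_comm] at *; exact (Nat.div_add_mod n v).symm
  have hqr : r ≤ q := by
    have : q * v + v > v * v := by omega
    nlinarith
  have : (q - r) • v + r • (v + 1) ∈ M := add_mem (nsmul_mem hv (q-r)) (nsmul_mem hv1 r)
  apply hn
  have heq : (q - r) • v + r • (v + 1) = n := by
    simp only [smul_eq_mul]
    have h1 : (q - r) * v = q * v - r * v := Nat.sub_mul q r v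
    have h2 : r * v ≤ q * v := Nat.mul_le_mul_right v hqr
    have h3 : r * (v + 1) = r * v + r := by ring
    omega
  rwa [heq] at this

lemma mem_closure_nat_cast {X : Set ℕ} {z : ℤ}
    (hz : z ∈ AddSubmonoid.closure (((↑) : ℕ → ℤ) '' X)) :
    ∃ u ∈ AddSubmonoid.closure X, z = (u : ℤ) := by
  induction hz using AddSubmonoid.closure_induction with
  | mem x hx =>
      obtain ⟨n, hn, rfl⟩ := hx
      exact ⟨n, AddSubmonoid.subset_closure hn, rfl⟩
  | zero => exact ⟨0, zero_mem _, by simp⟩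
  | add a b _ _ ha hb =>
      obtain ⟨u1, h1, rfl⟩ := ha
      obtain ⟨u2, h2, rfl⟩ := hb
      exact ⟨u1 + u2, add_mem h1 h2, by push_cast; ring⟩

lemma closure_cofinite {X : Set ℕ} (hgcd : SetGcdOne X) :
    ((AddSubmonoid.closure X : Set ℕ))ᶜ.Finite := by
  set Y : Set ℤ := ((↑) : ℕ → ℤ) '' X with hY
  obtain ⟨g, hg⟩ := Int.subgroup_cyclic (AddSubgroup.closure Y)
  have hdvd : ∀ x ∈ X, g.natAbs ∣ x := by
    intro x hx
    have hmem : (x : ℤ) ∈ AddSubgroup.closure Y :=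
      AddSubgroup.subset_closure ⟨x, hx, rfl⟩
    rw [hg, AddSubgroup.mem_closure_singleton] at hmem
    obtain ⟨n, hn⟩ := hmem
    have : (g.natAbs : ℤ) ∣ (x : ℤ) :=
      (Int.natAbs_dvd).mpr ⟨n, by rw [← hn, smul_eq_mul, mul_comm]⟩
    exact_mod_cast this
  have h1 : g.natAbs = 1 := hgcd _ hdvd
  have hone : (1 : ℤ) ∈ AddSubgroup.closure Y := by
    rw [hg]
    rcases Int.natAbs_eq g with h | h <;> rw [h1] at h <;> push_cast at h
    · rw [h]; exact AddSubgroup.subset_closure rfl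
    · rw [show (1:ℤ) = -g by omega]
      exact neg_mem (AddSubgroup.subset_closure rfl)
  obtain ⟨u, hu, v, hv, huv⟩ := mem_group_closure_sub hone
  obtain ⟨u', hu', hue⟩ := mem_closure_nat_cast hu
  obtain ⟨v', hv', hve⟩ := mem_closure_nat_cast hv
  have huv' : u' = v' + 1 := by
    have : (u' : ℤ) = (v' : ℤ) + 1 := by rw [← hue, ← hve]; omega
    exact_mod_cast this
  exact cofinite_of_consec hv' (huv' ▸ hu')

theorem stmt13 (S : Set ℕ) (hS : IsNumericalSemigroup S) (hgcd : SetGcdOne (lefts S)) :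
    ∀ S' : Set ℕ, DescendantOf S S' →
      genus S' ≤ genus (genBy (lefts S)) ∧ nsConductor S' ≤ nsConductor (genBy (lefts S)) := by
  obtain ⟨h0, hadd, hfin⟩ := hS
  have hTfin : (genBy (lefts S))ᶜ.Finite := closure_cofinite hgcd
  intro S' hdesc
  have key : S' ⊆ S ∧ (0 ∈ S' ∧ (∀ a ∈ S', ∀ b ∈ S', a + b ∈ S') ∧ S'ᶜ.Finite)
      ∧ lefts S ⊆ S' := by
    induction hdesc with
    | refl => exact ⟨subset_rfl, ⟨h0, hadd, hfin⟩, fun x hx => hx.1⟩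
    | @tail mid W hmid hchild ih =>
        obtain ⟨hsub, ⟨hm0, hmadd, hmfin⟩, hlefts⟩ := ih
        obtain ⟨p, ⟨hpmem, hpne, hpprim⟩, hpge, rfl⟩ := hchild
        refine ⟨Set.diff_subset.trans hsub, ⟨⟨hm0, fun h => hpne (by simpa using h.symm)⟩,
          ?_, ?_⟩, ?_⟩
        · rintro a ⟨ha, hap⟩ b ⟨hb, hbp⟩
          refine ⟨hmadd a ha b hb, fun hc => ?_⟩
          simp only [Set.mem_singleton_iff] at hc hap hbp
          rcases Nat.eq_zero_or_pos a with rfl | hA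
          · exact hbp (by simpa using hc)
          rcases Nat.eq_zero_or_pos b with rfl | hB
          · exact hap (by simpa using hc)
          exact hpprim a ha b hb (by omega) (by omega) hc
        · have hcompl : (mid \ {p})ᶜ = midᶜ ∪ {p} := by
            ext n
            simp only [Set.mem_compl_iff, Set.mem_diff, Set.mem_singleton_iff, not_and,
              not_not, Set.mem_union]
            tauto
          rw [hcompl]
          exact hmfin.union (Set.finite_singleton p)
        · intro x hx
          have h1 : nsConductor S ≤ nsConductor mid := cond_anti hsub hmfin
          have hx2 := hx.2
          exact ⟨hlefts hx, by simp only [Set.mem_singleton_iff]; omega⟩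
  obtain ⟨hsub, ⟨h0', hadd', hfin'⟩, hlefts'⟩ := key
  have hTsub : genBy (lefts S) ⊆ S' := by
    intro x hx
    exact (AddSubmonoid.closure_le (S := ⟨⟨S', fun {a b} ha hb => hadd' a ha b hb⟩, h0'⟩)).mpr
      hlefts' hx
  exact ⟨Set.ncard_le_ncard (Set.compl_subset_compl.mpr hTsub) hTfin,
    cond_anti hTsub hTfin⟩
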